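/- arXiv:1907.07268 — 2 statements merged into one kernel-verified Lean document; each statement's English description precedes it below -/
import Mathlib

section
/- Let m ≥ 0 and let n ≤ n' be integers with m < n, and let f : Fin n → Fin n' be an injection. Then the algebra map φ_f sends the ideal I_{n',n'−m} ⊆ ℚ[x_1, …, x_{n'}] into the ideal I_{n,n−m} ⊆ ℚ[x_1, …, x_n], i.e., φ_f(I_{n',n'−m}) ⊆ I_{n,n−m}. (This is the key step showing that the degree pieces of the ideals I_{n,n−m} form a co-FI submodule for fixed m.) -/
open MvPolynomial Finset

/-- The ideal `I_{n,k} ⊆ ℚ[x_1, …, x_n]` generated by `x_1^k, …, x_n^k` together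
with the elementary symmetric polynomials `e_n, e_{n-1}, …, e_{n-k+1}`. -/
noncomputable def Idl (n k : ℕ) : Ideal (MvPolynomial (Fin n) ℚ) :=
  Ideal.span ((Set.range fun i : Fin n => MvPolynomial.X i ^ k) ∪
    ((fun d => MvPolynomial.esymm (Fin n) ℚ d) '' {d : ℕ | n - k + 1 ≤ d ∧ d ≤ n}))

/-- For an injection `f : Fin n → Fin n'`, the ℚ-algebra homomorphism
`φ_f : ℚ[x_1, …, x_{n'}] → ℚ[x_1, …, x_n]` with `φ_f(x_j) = x_i` if `j = f i`
and `φ_f(x_j) = 0` if `j` is not in the image of `f`. -/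
noncomputable def phiMap {n n' : ℕ} (f : Fin n → Fin n') :
    MvPolynomial (Fin n') ℚ →ₐ[ℚ] MvPolynomial (Fin n) ℚ :=
  MvPolynomial.aeval fun j : Fin n' =>
    if h : ∃ i, f i = j then MvPolynomial.X h.choose else 0

lemma phiMap_X_mem {n n' : ℕ} {f : Fin n → Fin n'} (hf : Function.Injective f) (i : Fin n) :
    phiMap f (MvPolynomial.X (f i)) = MvPolynomial.X i := by
  rw [phiMap, aeval_X, dif_pos ⟨i, rfl⟩]
  exact congrArg MvPolynomial.X (hf (⟨i, rfl⟩ : ∃ i', f i' = f i).choose_spec)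

lemma phiMap_X_not_mem {n n' : ℕ} (f : Fin n → Fin n') (j : Fin n')
    (hj : ¬ ∃ i, f i = j) : phiMap f (MvPolynomial.X j) = 0 := by
  rw [phiMap, aeval_X, dif_neg hj]

lemma phiMap_esymm {n n' : ℕ} {f : Fin n → Fin n'} (hf : Function.Injective f) (d : ℕ) :
    phiMap f (esymm (Fin n') ℚ d) = esymm (Fin n) ℚ d := by
  rw [esymm, esymm, map_sum]
  rw [← Finset.sum_subset (Finset.powersetCard_mono
      (Finset.subset_univ ((univ : Finset (Fin n)).map ⟨f, hf⟩)) (n := d))]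
  · rw [Finset.powersetCard_map, Finset.sum_map]
    refine Finset.sum_congr rfl fun s _ => ?_
    have hs : (Finset.mapEmbedding (⟨f, hf⟩ : Fin n ↪ Fin n')).toEmbedding s
        = s.map ⟨f, hf⟩ := rfl
    rw [hs, Finset.prod_map, map_prod]
    exact Finset.prod_congr rfl fun i _ => phiMap_X_mem hf i
  · intro t ht htn
    have hcard : t.card = d := (Finset.mem_powersetCard.mp ht).2
    have hsub : ¬ t ⊆ (univ : Finset (Fin n)).map ⟨f, hf⟩ := fun hsub =>
      htn (Finset.mem_powersetCard.mpr ⟨hsub, hcard⟩)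
    obtain ⟨j, hjt, hj⟩ := Finset.not_subset.mp hsub
    have hj' : ¬ ∃ i, f i = j := by simpa using hj
    rw [map_prod]
    exact Finset.prod_eq_zero hjt (phiMap_X_not_mem f j hj')

/-- for `0 ≤ m < n ≤ n'` and an injection `f : Fin n → Fin n'`,
the map `φ_f` sends the ideal `I_{n',n'-m}` into the ideal `I_{n,n-m}`. -/
theorem stmt8 (m n n' : ℕ) (hm : m < n) (hnn' : n ≤ n')
    (f : Fin n → Fin n') (hf : Function.Injective f) :
    ∀ P ∈ Idl n' (n' - m), phiMap f P ∈ Idl n (n - m) := by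
  have key : Idl n' (n' - m) ≤ Ideal.comap (phiMap f).toRingHom (Idl n (n - m)) := by
    rw [Idl, Ideal.span_le]
    rintro p (⟨j, rfl⟩ | ⟨d, ⟨hd1, hd2⟩, rfl⟩)
    · simp only [SetLike.mem_coe, Ideal.mem_comap, AlgHom.toRingHom_eq_coe,
        RingHom.coe_coe, map_pow]
      by_cases hj : ∃ i, f i = j
      · obtain ⟨i, rfl⟩ := hj
        rw [phiMap_X_mem hf]
        have hexp : n' - m = (n - m) + (n' - n) := by omega
        rw [hexp, pow_add]
        exact Ideal.mul_mem_right _ _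
          (Ideal.subset_span (Or.inl ⟨i, rfl⟩))
      · rw [phiMap_X_not_mem f j hj, zero_pow (by omega)]
        exact zero_mem _
    · simp only [SetLike.mem_coe, Ideal.mem_comap, AlgHom.toRingHom_eq_coe,
        RingHom.coe_coe, phiMap_esymm hf]
      by_cases hdn : d ≤ n
      · exact Ideal.subset_span (Or.inr ⟨d, ⟨by omega, hdn⟩, rfl⟩)
      · have : esymm (Fin n) ℚ d = 0 := by
          rw [esymm, Finset.powersetCard_eq_empty.mpr (by simpa using hdn), Finset.sum_empty]
        rw [this]; exact zero_mem _
  intro P hP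
  exact key hP
end

section
/- Let 0 ≤ m < n ≤ p ≤ r be integers and let f : {1,…,n} → {1,…,p} and g : {1,…,p} → {1,…,r} be injections. Then there exists an invertible ℂ-linear map B : ℂ^{r−m} → ℂ^{r−m} (depending only on f, g, m, n, p, r and not on the line configuration) such that for every n-tuple (ℓ_1, …, ℓ_n) of one-dimensional subspaces of ℂ^{n−m} and every index 1 ≤ j ≤ r, the image under B of the j-th line of ν_{g∘f}(ℓ_1, …, ℓ_n) equals the j-th line of ν_g(ν_f(ℓ_1, …, ℓ_n)); that is, B · ν_{g∘f} = ν_g ∘ ν_f as maps on tuples of lines. -/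
/-- The linear inclusion `ℂ^a → ℂ^b` into the first `a` coordinates. -/
noncomputable def iotaC (a b : ℕ) : (Fin a → ℂ) →ₗ[ℂ] (Fin b → ℂ) where
  toFun v := fun j => if h : (j : ℕ) < a then v ⟨(j : ℕ), h⟩ else 0
  map_add' u v := by funext j; by_cases h : (j : ℕ) < a <;> simp [h]
  map_smul' c v := by funext j; by_cases h : (j : ℕ) < a <;> simp [h]

/-- For `j` not in the image of `f`, `missingRank f j` is the number of elements
smaller than `j` which are not in the image of `f`; so if `j` is the `t`-th
smallest missing element (`t ≥ 1`) then `missingRank f j = t - 1`. -/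
def missingRank {n p : ℕ} (f : Fin n → Fin p) (j : Fin p) : ℕ :=
  (Finset.univ.filter fun j' : Fin p => j' < j ∧ ∀ i, f i ≠ j').card

/-- The map `ν_f` on tuples of subspaces: the `j`-th entry of
`ν_f (ℓ_1, …, ℓ_n)` is `ι(ℓ_i)` if `j = f i` (with `ι : ℂ^{n-m} → ℂ^{p-m}` the
inclusion into the first coordinates), and is the line spanned by the standard
basis vector `e_{t + n - m}` if `j = i_t` is the `t`-th smallest element outside
the image of `f` (all 1-indexed in the mathematical description; here encoded
0-indexed, so the basis vector has 0-based index `(n - m) + missingRank f j`). -/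
noncomputable def nu (m n p : ℕ) (f : Fin n → Fin p)
    (L : Fin n → Submodule ℂ (Fin (n - m) → ℂ)) :
    Fin p → Submodule ℂ (Fin (p - m) → ℂ) := fun j =>
  if h : ∃ i, f i = j then (L h.choose).map (iotaC (n - m) (p - m))
  else Submodule.span ℂ
    {fun a : Fin (p - m) => if (a : ℕ) = (n - m) + missingRank f j then (1 : ℂ) else 0}



/-- the set of elements missing from the image of f -/
def missSet {n p : ℕ} (f : Fin n → Fin p) : Finset (Fin p) :=
  Finset.univ.filter fun j => ∀ i, f i ≠ j

lemma missingRank_eq {n p : ℕ} (f : Fin n → Fin p) (j : Fin p) :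
    missingRank f j = ((missSet f).filter (· < j)).card := by
  unfold missingRank missSet
  congr 1
  ext j'
  simp [and_comm]

lemma mem_missSet {n p : ℕ} {f : Fin n → Fin p} {j : Fin p} :
    j ∈ missSet f ↔ ∀ i, f i ≠ j := by simp [missSet]

lemma card_missSet {n p : ℕ} (f : Fin n → Fin p) (hf : Function.Injective f) :
    (missSet f).card = p - n := by
  have h : missSet f = (Finset.univ.image f)ᶜ := by
    ext j; simp [missSet, eq_comm]
  rw [h, Finset.card_compl, Finset.card_image_of_injective _ hf]
  simp

lemma missingRank_lt {n p : ℕ} (f : Fin n → Fin p) {j : Fin p} (hj : j ∈ missSet f) :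
    missingRank f j < (missSet f).card := by
  rw [missingRank_eq]
  apply Finset.card_lt_card
  constructor
  · exact Finset.filter_subset _ _
  · intro hsub
    have := hsub hj
    simp at this

lemma missingRank_strictMonoOn {n p : ℕ} (f : Fin n → Fin p) {a b : Fin p}
    (ha : a ∈ missSet f) (hab : a < b) : missingRank f a < missingRank f b := by
  rw [missingRank_eq, missingRank_eq]
  apply Finset.card_lt_card
  constructor
  · intro x hx
    simp only [Finset.mem_filter] at hx ⊢
    exact ⟨hx.1, lt_trans hx.2 hab⟩
  · intro hsub
    have := hsub (Finset.mem_filter.mpr ⟨ha, hab⟩)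
    simp at this

lemma missingRank_injOn {n p : ℕ} (f : Fin n → Fin p) {a b : Fin p}
    (ha : a ∈ missSet f) (hb : b ∈ missSet f) (h : missingRank f a = missingRank f b) :
    a = b := by
  rcases lt_trichotomy a b with h1 | h1 | h1
  · exact absurd h (missingRank_strictMonoOn f ha h1).ne
  · exact h1
  · exact absurd h.symm (missingRank_strictMonoOn f hb h1).ne

/-- the rank map as an equiv from the missing set to `Fin (p - n)` -/
noncomputable def rankEquiv {n p : ℕ} (f : Fin n → Fin p) (hf : Function.Injective f) :
    {j : Fin p // j ∈ missSet f} ≃ Fin (p - n) :=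
  Equiv.ofBijective
    (fun j => ⟨missingRank f j.1, by
      have := missingRank_lt f j.2; rwa [card_missSet f hf] at this⟩)
    (by
      rw [Fintype.bijective_iff_injective_and_card]
      constructor
      · intro a b hab
        exact Subtype.ext (missingRank_injOn f a.2 b.2 (by simpa using congrArg Fin.val hab))
      · simp [Fintype.card_coe, card_missSet f hf])

lemma rankEquiv_apply {n p : ℕ} (f : Fin n → Fin p) (hf : Function.Injective f)
    (j : {j : Fin p // j ∈ missSet f}) :
    ((rankEquiv f hf j : Fin (p - n)) : ℕ) = missingRank f j.1 := rfl

lemma rankEquiv_symm {n p : ℕ} (f : Fin n → Fin p) (hf : Function.Injective f)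
    {j : Fin p} (hj : j ∈ missSet f) (hlt : missingRank f j < p - n) :
    (rankEquiv f hf).symm ⟨missingRank f j, hlt⟩ = ⟨j, hj⟩ := by
  apply (rankEquiv f hf).injective
  rw [Equiv.apply_symm_apply]
  rfl

/-- target index of the permutation for missing indices -/
noncomputable def Tmap (m n p r : ℕ) (f : Fin n → Fin p) (g : Fin p → Fin r) (j : Fin r) : ℕ :=
  if h : ∃ j', g j' = j then (n - m) + missingRank f h.choose
  else (p - m) + missingRank g j

section Main

variable {m n p r : ℕ} {f : Fin n → Fin p} {g : Fin p → Fin r}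
variable (hm : m < n) (hnp : n ≤ p) (hpr : p ≤ r)
variable (hf : Function.Injective f) (hg : Function.Injective g)

lemma choose_missSet_f (hGF : ∀ i, (g ∘ f) i ≠ j) (h : ∃ j', g j' = j) :
    h.choose ∈ missSet f := by
  rw [mem_missSet]
  intro i hi
  exact hGF i (by simp only [Function.comp_apply, hi, h.choose_spec])

include hm hnp hpr hf hg in
lemma Tmap_bounds {j : Fin r} (hj : j ∈ missSet (g ∘ f)) :
    n - m ≤ Tmap m n p r f g j ∧ Tmap m n p r f g j < r - m := by
  rw [Tmap]
  split_ifs with h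
  · have hc : h.choose ∈ missSet f := choose_missSet_f (mem_missSet.mp hj) h
    have h1 := missingRank_lt f hc
    rw [card_missSet f hf] at h1
    omega
  · have hjg : j ∈ missSet g := mem_missSet.mpr (fun j' hj' => h ⟨j', hj'⟩)
    have h1 := missingRank_lt g hjg
    rw [card_missSet g hg] at h1
    omega

omit hpr hg in
include hm hnp hf in
lemma Tmap_injOn {j₁ j₂ : Fin r} (hj₁ : j₁ ∈ missSet (g ∘ f)) (hj₂ : j₂ ∈ missSet (g ∘ f))
    (h : Tmap m n p r f g j₁ = Tmap m n p r f g j₂) : j₁ = j₂ := by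
  rw [Tmap, Tmap] at h
  split_ifs at h with h1 h2 h2
  · -- both in image of g
    have hc₁ : h1.choose ∈ missSet f := choose_missSet_f (mem_missSet.mp hj₁) h1
    have hc₂ : h2.choose ∈ missSet f := choose_missSet_f (mem_missSet.mp hj₂) h2
    have : h1.choose = h2.choose := missingRank_injOn f hc₁ hc₂ (by omega)
    rw [← h1.choose_spec, ← h2.choose_spec, this]
  · -- mixed: contradiction
    have hc₁ : h1.choose ∈ missSet f := choose_missSet_f (mem_missSet.mp hj₁) h1
    have hb := missingRank_lt f hc₁
    rw [card_missSet f hf] at hb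
    omega
  · have hc₂ : h2.choose ∈ missSet f := choose_missSet_f (mem_missSet.mp hj₂) h2
    have hb := missingRank_lt f hc₂
    rw [card_missSet f hf] at hb
    omega
  · have hjg₁ : j₁ ∈ missSet g := mem_missSet.mpr (fun j' hj' => h1 ⟨j', hj'⟩)
    have hjg₂ : j₂ ∈ missSet g := mem_missSet.mpr (fun j' hj' => h2 ⟨j', hj'⟩)
    exact missingRank_injOn g hjg₁ hjg₂ (by omega)

end Main

/-- the permutation on indices -/
noncomputable def psiFun (m n p r : ℕ) (f : Fin n → Fin p) (g : Fin p → Fin r)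
    (hgf : Function.Injective (g ∘ f)) (k : Fin (r - m)) : Fin (r - m) :=
  if _ : (k : ℕ) < n - m then k
  else if hb : (k : ℕ) - (n - m) < r - n then
    if hT : Tmap m n p r f g ((rankEquiv (g ∘ f) hgf).symm ⟨(k : ℕ) - (n - m), hb⟩).1 < r - m
    then ⟨_, hT⟩ else k
  else k

section Main2

variable {m n p r : ℕ} {f : Fin n → Fin p} {g : Fin p → Fin r}
variable (hm : m < n) (hnp : n ≤ p) (hpr : p ≤ r)
variable (hf : Function.Injective f) (hg : Function.Injective g)
variable (hgf : Function.Injective (g ∘ f))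

lemma psiFun_small {k : Fin (r - m)} (hk : (k : ℕ) < n - m) :
    psiFun m n p r f g hgf k = k := by
  rw [psiFun, dif_pos hk]

include hm hnp hpr hf hg in
lemma psiFun_large {k : Fin (r - m)} (hk : ¬ (k : ℕ) < n - m) :
    ∃ j : Fin r, j ∈ missSet (g ∘ f) ∧ (k : ℕ) = (n - m) + missingRank (g ∘ f) j ∧
      ((psiFun m n p r f g hgf k : Fin (r - m)) : ℕ) = Tmap m n p r f g j := by
  have hb : (k : ℕ) - (n - m) < r - n := by
    have := k.isLt; omega
  set jj := (rankEquiv (g ∘ f) hgf).symm ⟨(k : ℕ) - (n - m), hb⟩ with hjj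
  refine ⟨jj.1, jj.2, ?_, ?_⟩
  · have h : (rankEquiv (g ∘ f) hgf) jj = ⟨(k : ℕ) - (n - m), hb⟩ :=
      Equiv.apply_symm_apply (rankEquiv (g ∘ f) hgf) ⟨(k : ℕ) - (n - m), hb⟩
    have h2 : missingRank (g ∘ f) jj.1 = (k : ℕ) - (n - m) := by
      have := congrArg Fin.val h
      rwa [rankEquiv_apply] at this
    have := k.isLt
    omega
  · have hT := (Tmap_bounds hm hnp hpr hf hg (j := jj.1) jj.2).2
    rw [psiFun, dif_neg hk, dif_pos hb, dif_pos hT]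

include hm hnp hpr hf hg in
lemma psiFun_injective : Function.Injective (psiFun m n p r f g hgf) := by
  intro k₁ k₂ hk
  by_cases h1 : (k₁ : ℕ) < n - m <;> by_cases h2 : (k₂ : ℕ) < n - m
  · rwa [psiFun_small hgf h1, psiFun_small hgf h2] at hk
  · obtain ⟨j₂, hj₂, -, hv₂⟩ := psiFun_large hm hnp hpr hf hg hgf h2
    rw [psiFun_small hgf h1] at hk
    have hb := (Tmap_bounds hm hnp hpr hf hg hj₂).1
    rw [hk] at h1
    rw [hv₂] at h1
    omega
  · obtain ⟨j₁, hj₁, -, hv₁⟩ := psiFun_large hm hnp hpr hf hg hgf h1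
    rw [psiFun_small hgf h2] at hk
    have hb := (Tmap_bounds hm hnp hpr hf hg hj₁).1
    rw [← hk] at h2
    rw [hv₁] at h2
    omega
  · obtain ⟨j₁, hj₁, he₁, hv₁⟩ := psiFun_large hm hnp hpr hf hg hgf h1
    obtain ⟨j₂, hj₂, he₂, hv₂⟩ := psiFun_large hm hnp hpr hf hg hgf h2
    have hT : Tmap m n p r f g j₁ = Tmap m n p r f g j₂ := by
      rw [← hv₁, ← hv₂, hk]
    have := Tmap_injOn hm hnp hf hj₁ hj₂ hT
    subst this
    exact Fin.ext (by omega)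

end Main2


lemma iotaC_apply (a b : ℕ) (v : Fin a → ℂ) (j : Fin b) :
    iotaC a b v j = if h : (j : ℕ) < a then v ⟨(j : ℕ), h⟩ else 0 := rfl


/-- for `0 ≤ m < n ≤ p ≤ r` and injections `f : Fin n → Fin p`,
`g : Fin p → Fin r`, there is an invertible linear map `B` of `ℂ^{r-m}`,
depending only on `f, g, m, n, p, r`, such that for every `n`-tuple of
one-dimensional subspaces of `ℂ^{n-m}` and every index `j`, applying `B` to the
`j`-th line of `ν_{g∘f}(ℓ)` gives the `j`-th line of `ν_g(ν_f(ℓ))`. -/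
theorem stmt15 (m n p r : ℕ) (hm : m < n) (hnp : n ≤ p) (hpr : p ≤ r)
    (f : Fin n → Fin p) (hf : Function.Injective f)
    (g : Fin p → Fin r) (hg : Function.Injective g) :
    ∃ B : (Fin (r - m) → ℂ) ≃ₗ[ℂ] (Fin (r - m) → ℂ),
      ∀ L : Fin n → Submodule ℂ (Fin (n - m) → ℂ),
        (∀ i, Module.finrank ℂ (L i) = 1) →
        ∀ j : Fin r,
          (nu m n r (g ∘ f) L j).map B.toLinearMap = nu m p r g (nu m n p f L) j := by
  classical
  have hgf : Function.Injective (g ∘ f) := hg.comp hf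
  set σ : Equiv.Perm (Fin (r - m)) :=
    Equiv.ofBijective _
      (Finite.injective_iff_bijective.mp (psiFun_injective hm hnp hpr hf hg hgf)) with hσdef
  have hσ_apply : ∀ k, σ k = psiFun m n p r f g hgf k := fun k => rfl
  have hσ_small : ∀ k : Fin (r - m), (k : ℕ) < n - m → σ k = k := by
    intro k hk; rw [hσ_apply, psiFun_small hgf hk]
  have hσsymm_small : ∀ k : Fin (r - m), (k : ℕ) < n - m → σ.symm k = k := by
    intro k hk
    conv_lhs => rw [← hσ_small k hk]
    exact σ.symm_apply_apply k
  have hσsymm_large : ∀ k : Fin (r - m), ¬ (k : ℕ) < n - m →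
      ¬ ((σ.symm k : Fin (r - m)) : ℕ) < n - m := by
    intro k hk hcon
    have h1 := hσ_small _ hcon
    rw [Equiv.apply_symm_apply] at h1
    exact hk (by rw [h1]; exact hcon)
  set B : (Fin (r - m) → ℂ) ≃ₗ[ℂ] (Fin (r - m) → ℂ) :=
    LinearEquiv.funCongrLeft ℂ ℂ σ.symm with hBdef
  have hB : ∀ (v : Fin (r - m) → ℂ) (k : Fin (r - m)),
      B.toLinearMap v k = v (σ.symm k) := fun v k => rfl
  refine ⟨B, ?_⟩
  intro L _ j
  by_cases hGF : ∃ i, (g ∘ f) i = j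
  · -- case: j is in the image of g ∘ f
    have hG : ∃ j', g j' = j := ⟨f hGF.choose, hGF.choose_spec⟩
    have hgc : f hGF.choose = hG.choose := hg (hGF.choose_spec.trans hG.choose_spec.symm)
    have hF : ∃ i, f i = hG.choose := ⟨hGF.choose, hgc⟩
    have h1 : hF.choose = hGF.choose := hf (by rw [hF.choose_spec, hgc])
    simp only [nu]
    rw [dif_pos hGF, dif_pos hG, dif_pos hF, h1]
    rw [← Submodule.map_comp, ← Submodule.map_comp]
    congr 1
    apply LinearMap.ext
    intro v
    funext k
    simp only [LinearMap.comp_apply]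
    rw [hB]
    by_cases hk : (k : ℕ) < n - m
    · rw [hσsymm_small k hk]
      have hkp : (k : ℕ) < p - m := by omega
      rw [iotaC_apply, iotaC_apply, dif_pos hk, dif_pos hkp, iotaC_apply]
      rw [dif_pos (show ((⟨(k : ℕ), hkp⟩ : Fin (p - m)) : ℕ) < n - m from hk)]
    · rw [iotaC_apply, dif_neg (hσsymm_large k hk), iotaC_apply]
      by_cases hkp : (k : ℕ) < p - m
      · rw [dif_pos hkp, iotaC_apply,
          dif_neg (show ¬ ((⟨(k : ℕ), hkp⟩ : Fin (p - m)) : ℕ) < n - m from hk)]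
      · rw [dif_neg hkp]
  · -- case: j is missing from the image of g ∘ f
    have hj : j ∈ missSet (g ∘ f) := mem_missSet.mpr (fun i hi => hGF ⟨i, hi⟩)
    have hS : (n - m) + missingRank (g ∘ f) j < r - m := by
      have := missingRank_lt (g ∘ f) hj
      rw [card_missSet _ hgf] at this
      omega
    have hTb := Tmap_bounds hm hnp hpr hf hg hj
    -- σ sends the source index to the target index
    have hσS : σ ⟨(n - m) + missingRank (g ∘ f) j, hS⟩ =
        ⟨Tmap m n p r f g j, hTb.2⟩ := by
      obtain ⟨j', hj', he, hv⟩ := psiFun_large hm hnp hpr hf hg hgf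
        (k := ⟨(n - m) + missingRank (g ∘ f) j, hS⟩)
        (by simp only [Fin.val_mk]; omega)
      simp only [Fin.val_mk] at he
      have hjj : j' = j := missingRank_injOn (g ∘ f) hj' hj (by omega)
      rw [hjj] at hv
      exact Fin.ext (by rw [hσ_apply]; exact hv)
    -- B maps the source basis vector to the target basis vector
    have hBvS : B.toLinearMap
        (fun a : Fin (r - m) =>
          if (a : ℕ) = (n - m) + missingRank (g ∘ f) j then (1 : ℂ) else 0) =
        fun a : Fin (r - m) => if (a : ℕ) = Tmap m n p r f g j then (1 : ℂ) else 0 := by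
      funext k
      rw [hB]
      by_cases hk : k = ⟨Tmap m n p r f g j, hTb.2⟩
      · subst hk
        have h4 : σ.symm ⟨Tmap m n p r f g j, hTb.2⟩ =
            ⟨(n - m) + missingRank (g ∘ f) j, hS⟩ := by
          rw [← hσS, Equiv.symm_apply_apply]
        rw [h4]
        simp
      · have h2 : ¬ ((σ.symm k : Fin (r - m)) : ℕ) = (n - m) + missingRank (g ∘ f) j := by
          intro hcon
          apply hk
          have h3 : σ.symm k = ⟨(n - m) + missingRank (g ∘ f) j, hS⟩ := Fin.ext hcon
          rw [← hσS, ← h3, Equiv.apply_symm_apply]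
        have h3 : ¬ (k : ℕ) = Tmap m n p r f g j := fun hcon => hk (Fin.ext hcon)
        simp [h2, h3]
    simp only [nu]
    rw [dif_neg hGF, Submodule.map_span, Set.image_singleton, hBvS]
    by_cases hG : ∃ j', g j' = j
    · rw [dif_pos hG]
      have hj₀ : hG.choose ∈ missSet f := choose_missSet_f (mem_missSet.mp hj) hG
      have hnF : ¬ ∃ i, f i = hG.choose := fun ⟨i, hi⟩ => (mem_missSet.mp hj₀) i hi
      rw [dif_neg hnF, Submodule.map_span, Set.image_singleton]
      have hidx : (n - m) + missingRank f hG.choose < p - m := by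
        have := missingRank_lt f hj₀
        rw [card_missSet f hf] at this
        omega
      have hT : Tmap m n p r f g j = (n - m) + missingRank f hG.choose := by
        rw [Tmap, dif_pos hG]
      congr 1
      rw [Set.singleton_eq_singleton_iff]
      funext a
      rw [iotaC_apply, hT]
      by_cases ha : (a : ℕ) < p - m
      · rw [dif_pos ha]
      · rw [dif_neg ha, if_neg (by omega : ¬ (a : ℕ) = (n - m) + missingRank f hG.choose)]
    · rw [dif_neg hG]
      have hT : Tmap m n p r f g j = (p - m) + missingRank g j := by
        rw [Tmap, dif_neg hG]
      rw [hT]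
end
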